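/- arXiv:2012.03549 — 2 statements merged into one kernel-verified Lean document; each statement's English description precedes it below -/
import Mathlib

section
/- Let m, k ≥ 1, let v : ℝ^k → ℝ^m be Borel measurable, and let μ be a finite positive Borel measure on ℝ^m × ℝ^k such that for every s ∈ ℝ the map Φ_s(x, ξ) := (x + s·v(ξ), ξ) preserves μ, i.e. the pushforward (Φ_s)_*μ equals μ. Then μ({(x, ξ) ∈ ℝ^m × ℝ^k : v(ξ) ≠ 0}) = 0; in particular, if v(ξ) ≠ 0 for every ξ ∈ ℝ^k, then μ = 0. -/
open MeasureTheory Filter Topology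

lemma aux9 {m k : ℕ} (v : (Fin k → ℝ) → (Fin m → ℝ)) (hv : Measurable v)
    (μ : Measure ((Fin m → ℝ) × (Fin k → ℝ))) [IsFiniteMeasure μ]
    (hinv : ∀ s : ℝ,
      Measure.map (fun q : (Fin m → ℝ) × (Fin k → ℝ) => (q.1 + s • v q.2, q.2)) μ = μ)
    (i : Fin m) (ε : ℝ) (hε : 0 < ε) (a : ℝ) :
    μ {q : (Fin m → ℝ) × (Fin k → ℝ) | ε ≤ v q.2 i ∧ q.1 i ∈ Set.Ico a (a + 1)} = 0 := by
  set A := {q : (Fin m → ℝ) × (Fin k → ℝ) | ε ≤ v q.2 i ∧ q.1 i ∈ Set.Ico a (a + 1)} with hAdef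
  have hvm : Measurable fun q : (Fin m → ℝ) × (Fin k → ℝ) => v q.2 i :=
    (measurable_pi_apply i).comp (hv.comp measurable_snd)
  have hxm : Measurable fun q : (Fin m → ℝ) × (Fin k → ℝ) => q.1 i :=
    (measurable_pi_apply i).comp measurable_fst
  have hA : MeasurableSet A := by
    have : A = {q : (Fin m → ℝ) × (Fin k → ℝ) | ε ≤ v q.2 i} ∩
        ((fun q : (Fin m → ℝ) × (Fin k → ℝ) => q.1 i) ⁻¹' Set.Ico a (a + 1)) := rfl
    rw [this]
    exact (measurableSet_le measurable_const hvm).inter (hxm measurableSet_Ico)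
  set C : ℕ → Set ((Fin m → ℝ) × (Fin k → ℝ)) :=
    fun n => {q | ε ≤ v q.2 i ∧ q.1 i < a + 1 - n * ε} with hCdef
  have hC : ∀ n, MeasurableSet (C n) := by
    intro n
    exact (measurableSet_le measurable_const hvm).inter (measurableSet_lt hxm measurable_const)
  have hAC : ∀ n : ℕ, μ A ≤ μ (C n) := by
    intro n
    have hΦ : Measurable fun q : (Fin m → ℝ) × (Fin k → ℝ) =>
        (q.1 + (n : ℝ) • v q.2, q.2) :=
      (measurable_fst.add ((hv.comp measurable_snd).const_smul ((n : ℝ)))).prodMk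
        measurable_snd
    have h1 : μ A = μ ((fun q : (Fin m → ℝ) × (Fin k → ℝ) =>
        (q.1 + (n : ℝ) • v q.2, q.2)) ⁻¹' A) := by
      conv_lhs => rw [← hinv (n : ℝ)]
      rw [Measure.map_apply hΦ hA]
    rw [h1]
    apply measure_mono
    rintro q ⟨hq1, hq2, hq3⟩
    refine ⟨hq1, ?_⟩
    simp only [Pi.add_apply, Pi.smul_apply, smul_eq_mul] at hq2 hq3
    have hnv : (n : ℝ) * ε ≤ (n : ℝ) * v q.2 i :=
      mul_le_mul_of_nonneg_left hq1 (Nat.cast_nonneg n)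
    nlinarith
  have hanti : Antitone C := by
    intro n n' hle q hq
    refine ⟨hq.1, lt_of_lt_of_le hq.2 ?_⟩
    have : (n : ℝ) * ε ≤ (n' : ℝ) * ε :=
      mul_le_mul_of_nonneg_right (Nat.cast_le.mpr hle) hε.le
    linarith
  have hempty : ⋂ n, C n = ∅ := by
    ext q
    simp only [Set.mem_iInter, Set.mem_empty_iff_false, iff_false, not_forall]
    by_contra h
    push_neg at h
    obtain ⟨n, hn⟩ := exists_nat_gt ((a + 1 - q.1 i) / ε)
    have := (h n).2
    have : (a + 1 - q.1 i) / ε < n := hn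
    have h2 : a + 1 - q.1 i < n * ε := by
      rwa [div_lt_iff₀ hε] at this
    linarith [(h n).2]
  have htend : Tendsto (fun n => μ (C n)) atTop (𝓝 0) := by
    have := tendsto_measure_iInter_atTop (μ := μ) (fun n => (hC n).nullMeasurableSet) hanti ⟨0, measure_ne_top μ _⟩
    rwa [hempty, measure_empty] at this
  have : μ A ≤ 0 := ge_of_tendsto htend (Eventually.of_forall hAC)
  exact le_antisymm this zero_le

/-- **Finite measures invariant under free transport do not charge the set where the
velocity is non-zero.**  If `μ` is a finite positive Borel measure on `ℝ^m × ℝ^k` invariant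
under `Φ_s(x,ξ) = (x + s·v(ξ), ξ)` for every `s ∈ ℝ`, then `μ{(x,ξ) : v(ξ) ≠ 0} = 0`. -/
theorem statement9 (m k : ℕ) (hm : 1 ≤ m) (hk : 1 ≤ k)
    (v : (Fin k → ℝ) → (Fin m → ℝ)) (hv : Measurable v)
    (μ : Measure ((Fin m → ℝ) × (Fin k → ℝ))) [IsFiniteMeasure μ]
    (hinv : ∀ s : ℝ,
      Measure.map (fun q : (Fin m → ℝ) × (Fin k → ℝ) => (q.1 + s • v q.2, q.2)) μ = μ) :
    μ {q : (Fin m → ℝ) × (Fin k → ℝ) | v q.2 ≠ 0} = 0 := by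
  have hinv' : ∀ s : ℝ,
      Measure.map (fun q : (Fin m → ℝ) × (Fin k → ℝ) =>
        (q.1 + s • (fun ξ => -(v ξ)) q.2, q.2)) μ = μ := by
    intro s
    have h := hinv (-s)
    convert h using 2 with q
    simp [smul_neg, neg_smul]
  have hv' : Measurable fun ξ => -(v ξ) := hv.neg
  -- the covering sets
  set Sp : Fin m → ℕ → ℤ → Set ((Fin m → ℝ) × (Fin k → ℝ)) := fun i j a =>
    {q | (1 / ((j : ℝ) + 1)) ≤ v q.2 i ∧ q.1 i ∈ Set.Ico (a : ℝ) ((a : ℝ) + 1)}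
  set Sn : Fin m → ℕ → ℤ → Set ((Fin m → ℝ) × (Fin k → ℝ)) := fun i j a =>
    {q | (1 / ((j : ℝ) + 1)) ≤ (fun ξ => -(v ξ)) q.2 i ∧
      q.1 i ∈ Set.Ico (a : ℝ) ((a : ℝ) + 1)}
  have hpos : ∀ j : ℕ, (0 : ℝ) < 1 / ((j : ℝ) + 1) := by
    intro j
    positivity
  have hcover : {q : (Fin m → ℝ) × (Fin k → ℝ) | v q.2 ≠ 0} ⊆
      ⋃ i, ⋃ j, ⋃ a, (Sp i j a ∪ Sn i j a) := by
    intro q hq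
    obtain ⟨i, hi⟩ := Function.ne_iff.mp hq
    rw [Pi.zero_apply] at hi
    rcases lt_or_gt_of_ne hi with h | h
    · -- v q.2 i < 0 : use Sn
      obtain ⟨j, hj⟩ := exists_nat_one_div_lt (show (0:ℝ) < -(v q.2 i) by linarith)
      refine Set.mem_iUnion.mpr ⟨i, Set.mem_iUnion.mpr ⟨j, Set.mem_iUnion.mpr
        ⟨⌊q.1 i⌋, Or.inr ⟨hj.le, Int.floor_le _, Int.lt_floor_add_one _⟩⟩⟩⟩
    · obtain ⟨j, hj⟩ := exists_nat_one_div_lt h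
      refine Set.mem_iUnion.mpr ⟨i, Set.mem_iUnion.mpr ⟨j, Set.mem_iUnion.mpr
        ⟨⌊q.1 i⌋, Or.inl ⟨hj.le, Int.floor_le _, Int.lt_floor_add_one _⟩⟩⟩⟩
  refine measure_mono_null hcover ?_
  refine measure_iUnion_null fun i => measure_iUnion_null fun j => measure_iUnion_null fun a =>
    measure_union_null ?_ ?_
  · exact aux9 v hv μ hinv i _ (hpos j) (a : ℝ)
  · exact aux9 (fun ξ => -(v ξ)) hv' μ hinv' i _ (hpos j) (a : ℝ)
end

section
/- Let k ∈ ℤ, let Δ : ℝ → ℝ be twice differentiable on a neighborhood of the point ρ(kπ), and let ρ : ℝ → ℝ be differentiable on a neighborhood of kπ with ρ′ differentiable at kπ and ρ′(kπ) = 0. Suppose Δ(ρ(ξ)) = 2·cos ξ for all ξ in a neighborhood of kπ. Then Δ′(ρ(kπ)) · ρ″(kπ) = 2·(−1)^{k+1}; in particular ρ″(kπ) ≠ 0 and Δ′(ρ(kπ)) ≠ 0. -/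
open Real Filter

/-- **Non-degeneracy of critical points of 1D Bloch energies.**  If `Δ(ρ(ξ)) = 2 cos ξ`
near `kπ`, with `Δ` twice differentiable near `ρ(kπ)`, `ρ` differentiable near `kπ`,
`ρ′` differentiable at `kπ` and `ρ′(kπ) = 0`, then
`Δ′(ρ(kπ)) · ρ″(kπ) = 2·(−1)^{k+1}`; in particular `ρ″(kπ) ≠ 0` and `Δ′(ρ(kπ)) ≠ 0`. -/
theorem statement14 (Δ ρ : ℝ → ℝ) (k : ℤ)
    (hΔ : ∀ᶠ y in nhds (ρ ((k : ℝ) * π)), DifferentiableAt ℝ Δ y ∧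
      DifferentiableAt ℝ (deriv Δ) y)
    (hρ : ∀ᶠ ξ in nhds ((k : ℝ) * π), DifferentiableAt ℝ ρ ξ)
    (hρ' : DifferentiableAt ℝ (deriv ρ) ((k : ℝ) * π))
    (hcrit : deriv ρ ((k : ℝ) * π) = 0)
    (heq : ∀ᶠ ξ in nhds ((k : ℝ) * π), Δ (ρ ξ) = 2 * Real.cos ξ) :
    deriv Δ (ρ ((k : ℝ) * π)) * deriv (deriv ρ) ((k : ℝ) * π) = 2 * (-1 : ℝ) ^ (k + 1) ∧
      deriv (deriv ρ) ((k : ℝ) * π) ≠ 0 ∧ deriv Δ (ρ ((k : ℝ) * π)) ≠ 0 := by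
  set x : ℝ := (k : ℝ) * π with hx
  have hρx : DifferentiableAt ℝ ρ x := hρ.self_of_nhds
  have hΔρ : ∀ᶠ ξ in nhds x, DifferentiableAt ℝ Δ (ρ ξ) ∧
      DifferentiableAt ℝ (deriv Δ) (ρ ξ) := hρx.continuousAt.eventually hΔ
  -- first derivative identity
  have h1 : (fun ξ => deriv Δ (ρ ξ) * deriv ρ ξ) =ᶠ[nhds x] (fun ξ => -2 * Real.sin ξ) := by
    have hev : deriv (fun ξ => Δ (ρ ξ)) =ᶠ[nhds x] deriv (fun ξ => 2 * Real.cos ξ) :=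
      Filter.EventuallyEq.deriv (heq : (fun ξ => Δ (ρ ξ)) =ᶠ[nhds x] fun ξ => 2 * Real.cos ξ)
    filter_upwards [hev, hρ, hΔρ] with ξ hdev hρξ hΔξ
    have hl : deriv (fun ξ => Δ (ρ ξ)) ξ = deriv Δ (ρ ξ) * deriv ρ ξ :=
      deriv_comp ξ hΔξ.1 hρξ
    have hr : deriv (fun ξ => 2 * Real.cos ξ) ξ = -2 * Real.sin ξ := by
      rw [deriv_const_mul _ Real.differentiable_cos.differentiableAt, Real.deriv_cos]; ring
    rw [← hl, hdev, hr]
  -- differentiate again at x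
  have hdΔρ : DifferentiableAt ℝ (fun ξ => deriv Δ (ρ ξ)) x :=
    (hΔ.self_of_nhds.2).comp x hρx
  have hkey : deriv (fun ξ => deriv Δ (ρ ξ) * deriv ρ ξ) x
      = deriv (fun ξ => -2 * Real.sin ξ) x := h1.deriv_eq
  have hL : deriv (fun ξ => deriv Δ (ρ ξ) * deriv ρ ξ) x
      = deriv Δ (ρ x) * deriv (deriv ρ) x := by
    rw [deriv_fun_mul hdΔρ hρ', hcrit]; ring
  have hR : deriv (fun ξ => -2 * Real.sin ξ) x = 2 * (-1 : ℝ) ^ (k + 1) := by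
    rw [deriv_const_mul _ Real.differentiable_sin.differentiableAt, Real.deriv_sin]
    have : Real.cos x = (-1 : ℝ) ^ k := by
      have := Real.cos_int_mul_pi_sub 0 k
      simpa using this
    rw [this, zpow_add_one₀ (by norm_num : (-1 : ℝ) ≠ 0)]
    ring
  have hmain : deriv Δ (ρ x) * deriv (deriv ρ) x = 2 * (-1 : ℝ) ^ (k + 1) := by
    rw [← hL, hkey, hR]
  have hne : (2 : ℝ) * (-1 : ℝ) ^ (k + 1) ≠ 0 := by
    apply mul_ne_zero (by norm_num)
    exact zpow_ne_zero _ (by norm_num)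
  refine ⟨hmain, ?_, ?_⟩
  · intro h; rw [h, mul_zero] at hmain; exact hne hmain.symm
  · intro h; rw [h, zero_mul] at hmain; exact hne hmain.symm
end
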